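/- Let G be a Hausdorff topological group whose underlying space is hemicompact, has countable tightness, and is a Tanaka space. Then G is locally compact and metrizable. -/

import Mathlib

open Filter Topology Set

variable {G : Type*}

/-- A sequence `x` meshes with a filter `H` if every tail of the sequence meets every
member of `H`. -/
def SeqMeshes (x : ℕ → G) (H : Filter G) : Prop :=
  ∀ B ∈ H, ∀ k : ℕ, ∃ n ≥ k, x n ∈ B

/-- The adherence of a filter: the intersection of the closures of its members. -/
def adh [TopologicalSpace G] (H : Filter G) : Set G :=
  ⋂ A ∈ H, closure A

/-- A hemicompact space. -/
def Hemicompact (X : Type*) [TopologicalSpace X] : Prop :=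
  ∃ K : ℕ → Set X, (∀ n, IsCompact (K n)) ∧ ∀ C : Set X, IsCompact C → ∃ n, C ⊆ K n

/-- A Tanaka space. -/
def TanakaSpace (X : Type*) [TopologicalSpace X] : Prop :=
  ∀ H : Filter X, H.IsCountablyGenerated → (adh H).Nonempty →
    ∃ (x : ℕ → X) (l : X), Tendsto x atTop (𝓝 l) ∧ SeqMeshes x H

/-- A space has countable tightness if every point in the closure of a set `A` lies in
the closure of a countable subset of `A`. -/
def CountableTightness (X : Type*) [TopologicalSpace X] : Prop :=
  ∀ (A : Set X) (x : X), x ∈ closure A → ∃ B ⊆ A, B.Countable ∧ x ∈ closure B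

section Auxiliary

open Pointwise Uniformity
set_option linter.unusedSectionVars false

universe u

namespace TanakaAux

variable {G : Type u} [Group G] [TopologicalSpace G] [IsTopologicalGroup G] [T2Space G]

/-- A set which is a compact closed subgroup. -/
structure IsCSG (S : Set G) : Prop where
  one_mem : (1 : G) ∈ S
  mul_mem : ∀ a ∈ S, ∀ b ∈ S, a * b ∈ S
  inv_mem : ∀ a ∈ S, a⁻¹ ∈ S
  cpt : IsCompact S
  closed : IsClosed S

/-- A countable intersection of open sets. -/
def CoGd (S : Set G) : Prop :=
  ∃ T : Set (Set G), T.Countable ∧ (∀ t ∈ T, IsOpen t) ∧ S = ⋂₀ T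

theorem IsCSG.inter {S₁ S₂ : Set G} (h₁ : IsCSG S₁) (h₂ : IsCSG S₂) : IsCSG (S₁ ∩ S₂) where
  one_mem := ⟨h₁.one_mem, h₂.one_mem⟩
  mul_mem := fun a ha b hb => ⟨h₁.mul_mem a ha.1 b hb.1, h₂.mul_mem a ha.2 b hb.2⟩
  inv_mem := fun a ha => ⟨h₁.inv_mem a ha.1, h₂.inv_mem a ha.2⟩
  cpt := h₁.cpt.inter_right h₂.closed
  closed := h₁.closed.inter h₂.closed

theorem CoGd.inter {S₁ S₂ : Set G} (h₁ : CoGd S₁) (h₂ : CoGd S₂) : CoGd (S₁ ∩ S₂) := by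
  obtain ⟨T₁, hc₁, ho₁, rfl⟩ := h₁
  obtain ⟨T₂, hc₂, ho₂, rfl⟩ := h₂
  exact ⟨T₁ ∪ T₂, hc₁.union hc₂, fun t ht => ht.elim (ho₁ t) (ho₂ t),
    (Set.sInter_union T₁ T₂).symm⟩

theorem CoGd.iInter {ι : Type v} [Countable ι] {f : ι → Set G} (h : ∀ i, CoGd (f i)) :
    CoGd (⋂ i, f i) := by
  choose T hc ho hf using h
  refine ⟨⋃ i, T i, countable_iUnion hc, ?_, ?_⟩
  · intro t ht
    obtain ⟨i, hi⟩ := mem_iUnion.mp ht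
    exact ho i t hi
  · rw [Set.sInter_iUnion]
    exact iInter_congr hf

/-- Inside any open neighbourhood of `1` contained in a compact set, there is a compact
subgroup which is a countable intersection of open sets. -/
theorem exists_csg_subset {C U : Set G} (hC : IsCompact C) (hUo : IsOpen U)
    (hU1 : (1 : G) ∈ U) (hUC : U ⊆ C) :
    ∃ N : Set G, IsCSG N ∧ CoGd N ∧ N ⊆ U := by
  have step : ∀ V : {V : Set G // IsOpen V ∧ (1 : G) ∈ V},
      ∃ V' : {V : Set G // IsOpen V ∧ (1 : G) ∈ V},
        V'.1 ⊆ V.1 ∧ ∀ v ∈ V'.1, ∀ w ∈ V'.1, v / w ∈ V.1 := by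
    rintro ⟨V, hVo, hV1⟩
    obtain ⟨V', hV'n, hV'div⟩ := exists_nhds_split_inv (hVo.mem_nhds hV1)
    refine ⟨⟨interior V' ∩ V, isOpen_interior.inter hVo,
      ⟨mem_interior_iff_mem_nhds.mpr hV'n, hV1⟩⟩, inter_subset_right, ?_⟩
    exact fun v hv w hw => hV'div v (interior_subset hv.1) w (interior_subset hw.1)
  choose stepX hsub hdiv using step
  set F : ℕ → {V : Set G // IsOpen V ∧ (1 : G) ∈ V} :=
    fun n => Nat.rec ⟨U, hUo, hU1⟩ (fun _ ih => stepX ih) n with hF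
  have hFs : ∀ n, F (n + 1) = stepX (F n) := fun n => rfl
  have hFsub : ∀ n, (F (n + 1)).1 ⊆ (F n).1 := by
    intro n; rw [hFs]; exact hsub (F n)
  have hFdiv : ∀ n, ∀ v ∈ (F (n + 1)).1, ∀ w ∈ (F (n + 1)).1, v / w ∈ (F n).1 := by
    intro n; rw [hFs]; exact hdiv (F n)
  have hmono : ∀ m n, m ≤ n → (F n).1 ⊆ (F m).1 := by
    intro m n h
    induction h with
    | refl => exact subset_rfl
    | step _ ih => exact (hFsub _).trans ih
  set N : Set G := ⋂ n, (F n).1 with hN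
  have hNsub : ∀ n, N ⊆ (F n).1 := fun n => iInter_subset _ n
  have hone : ∀ n, (1 : G) ∈ (F n).1 := fun n => (F n).2.2
  have hcl : ∀ n, closure (F (n + 1)).1 ⊆ (F n).1 := by
    intro n x hx
    have hop : IsOpen (x • (F (n + 1)).1) := (F (n + 1)).2.1.smul x
    have hxm : x ∈ x • (F (n + 1)).1 := by
      refine ⟨1, (F (n + 1)).2.2, ?_⟩
      simp
    obtain ⟨y, hy1, hy2⟩ := mem_closure_iff.mp hx _ hop hxm
    obtain ⟨v, hv, hxy⟩ := hy1
    have : y / v ∈ (F n).1 := hFdiv n y hy2 v hv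
    have hxe : x = y / v := by
      rw [← hxy]; simp [div_eq_mul_inv, smul_eq_mul, mul_assoc]
    rwa [hxe]
  have hNinv : ∀ a ∈ N, a⁻¹ ∈ N := by
    intro a ha
    rw [hN, mem_iInter]
    intro n
    have := hFdiv n 1 (hone (n+1)) a (hNsub (n+1) ha)
    rwa [one_div] at this
  have hNmul : ∀ a ∈ N, ∀ b ∈ N, a * b ∈ N := by
    intro a ha b hb
    rw [hN, mem_iInter]
    intro n
    have hbinv : b⁻¹ ∈ (F (n + 1)).1 := by
      have := hFdiv (n + 1) 1 (hone (n+2)) b (hNsub (n+2) hb)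
      rwa [one_div] at this
    have := hFdiv n a (hNsub (n+1) ha) b⁻¹ hbinv
    rwa [div_inv_eq_mul] at this
  have hNeq : N = ⋂ n, closure (F (n + 1)).1 := by
    apply Subset.antisymm
    · exact subset_iInter fun n => (hNsub (n + 1)).trans subset_closure
    · intro x hx
      rw [hN, mem_iInter]
      exact fun n => hcl n (mem_iInter.mp hx n)
  have hNclosed : IsClosed N := by
    rw [hNeq]; exact isClosed_iInter fun n => isClosed_closure
  refine ⟨N, ⟨mem_iInter.mpr hone, hNmul, hNinv, ?_, hNclosed⟩, ?_, hNsub 0⟩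
  · exact IsCompact.of_isClosed_subset hC hNclosed ((hNsub 0).trans hUC)
  · exact ⟨Set.range fun n => (F n).1, countable_range _,
      fun t ht => by obtain ⟨n, rfl⟩ := ht; exact (F n).2.1,
      by rw [Set.sInter_range]⟩


/-- Separation of a point from a compact subgroup by a "uniform" neighbourhood. -/
theorem sep_subgroup {N : Set G} (hN : IsCSG N) {t : G} (ht : t ∉ N) :
    ∃ W : Set G, IsOpen W ∧ (1 : G) ∈ W ∧
      ∀ a ∈ N, ∀ w₁ ∈ W, ∀ w₂ ∈ W, ∀ b ∈ N, a * w₁⁻¹ * w₂ * b ≠ t := by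
  have hKc : IsCompact (N * {t} * N) := (hN.cpt.mul isCompact_singleton).mul hN.cpt
  have h1K : (1 : G) ∉ N * {t} * N := by
    rintro ⟨x, hx, n₂, hn₂, hxn⟩
    obtain ⟨n₁, hn₁, t', ht', rfl⟩ := hx
    rw [mem_singleton_iff] at ht'
    subst ht'
    have hxn' : n₁ * t' * n₂ = 1 := hxn
    apply ht
    have h2 : n₁⁻¹ * (n₁ * t' * n₂) * n₂⁻¹ = t' := by group
    have h3 : t' = n₁⁻¹ * n₂⁻¹ := by
      rw [← h2, hxn']; group
    rw [h3]
    exact hN.mul_mem _ (hN.inv_mem _ hn₁) _ (hN.inv_mem _ hn₂)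
  have hO : (N * {t} * N)ᶜ ∈ 𝓝 (1 : G) := hKc.isClosed.isOpen_compl.mem_nhds h1K
  obtain ⟨V, hVn, hVdiv⟩ := exists_nhds_split_inv hO
  refine ⟨(interior V)⁻¹, isOpen_interior.inv, ?_, ?_⟩
  · rw [Set.mem_inv, inv_one]
    exact mem_interior_iff_mem_nhds.mpr hVn
  · intro a ha w₁ hw₁ w₂ hw₂ b hb heq
    have h1 : w₁⁻¹ ∈ V := interior_subset hw₁
    have h2 : w₂⁻¹ ∈ V := interior_subset hw₂
    have hdiv := hVdiv _ h1 _ h2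
    apply hdiv
    have he1 : w₁⁻¹ / w₂⁻¹ = w₁⁻¹ * w₂ := by rw [div_eq_mul_inv, inv_inv]
    have he2 : w₁⁻¹ * w₂ = a⁻¹ * t * b⁻¹ := by rw [← heq]; group
    rw [he1, he2]
    exact ⟨a⁻¹ * t, ⟨a⁻¹, hN.inv_mem _ ha, t, rfl, rfl⟩, b⁻¹, hN.inv_mem _ hb, rfl⟩

/-- Escape lemma: a directed family of compact closed sets whose intersection lies in an
open set has a member inside the open set. -/
theorem escape {ι : Type v} [Nonempty ι] {M : ι → Set G} (hdir : Directed (· ⊇ ·) M)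
    (hc : ∀ i, IsCompact (M i)) (hcl : ∀ i, IsClosed (M i)) {U : Set G} (hU : IsOpen U)
    (hsub : (⋂ i, M i) ⊆ U) : ∃ i, M i ⊆ U := by
  by_contra h
  push_neg at h
  have hne : ∀ i, (M i ∩ Uᶜ).Nonempty := by
    intro i
    obtain ⟨x, hx1, hx2⟩ := not_subset.mp (h i)
    exact ⟨x, hx1, hx2⟩
  have hd2 : Directed (· ⊇ ·) fun i => M i ∩ Uᶜ := by
    intro i j
    obtain ⟨k, h1, h2⟩ := hdir i j
    exact ⟨k, inter_subset_inter_left _ h1, inter_subset_inter_left _ h2⟩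
  obtain ⟨x, hx⟩ := IsCompact.nonempty_iInter_of_directed_nonempty_isCompact_isClosed _ hd2 hne
    (fun i => (hc i).inter_right hU.isClosed_compl)
    (fun i => (hcl i).inter hU.isClosed_compl)
  rw [mem_iInter] at hx
  have hx1 : x ∈ ⋂ i, M i := mem_iInter.mpr fun i => (hx i).1
  exact (hx (Classical.arbitrary ι)).2 (hsub hx1)

/-- If `{1}` is a countable intersection of open sets in a locally compact group, then
`𝓝 1` is countably generated. -/
theorem cg_of_gdelta [LocallyCompactSpace G] {T : Set (Set G)} (hTc : T.Countable)
    (hTo : ∀ t ∈ T, IsOpen t) (hT : ⋂₀ T = {(1 : G)}) :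
    (𝓝 (1 : G)).IsCountablyGenerated := by
  have hne : (insert univ T).Nonempty := ⟨univ, mem_insert _ _⟩
  obtain ⟨O, hO⟩ := (hTc.insert univ).exists_eq_range hne
  have hOopen : ∀ n, IsOpen (O n) := by
    intro n
    have : O n ∈ insert univ T := by rw [hO]; exact mem_range_self n
    rcases this with h | h
    · rw [h]; exact isOpen_univ
    · exact hTo _ h
  have hOint : ⋂ n, O n = {(1 : G)} := by
    rw [← Set.sInter_range, ← hO, Set.sInter_insert, hT, univ_inter]
  have h1O : ∀ n, (1 : G) ∈ O n := by
    intro n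
    have : (1 : G) ∈ ⋂ n, O n := by rw [hOint]; exact rfl
    exact mem_iInter.mp this n
  have key : ∀ (k : ℕ) (V : {V : Set G // IsOpen V ∧ (1 : G) ∈ V ∧ IsCompact (closure V)}),
      ∃ V' : {V : Set G // IsOpen V ∧ (1 : G) ∈ V ∧ IsCompact (closure V)},
        closure V'.1 ⊆ V.1 ∩ O (k + 1) := by
    intro k V
    have hop : IsOpen (V.1 ∩ O (k + 1)) := V.2.1.inter (hOopen _)
    have h1 : (1 : G) ∈ V.1 ∩ O (k + 1) := ⟨V.2.2.1, h1O _⟩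
    obtain ⟨K, hKc, hK1, hKsub⟩ := exists_compact_subset hop h1
    have hclK : closure (interior K) ⊆ K := closure_minimal interior_subset hKc.isClosed
    exact ⟨⟨interior K, isOpen_interior, hK1,
      IsCompact.of_isClosed_subset hKc isClosed_closure hclK⟩, hclK.trans hKsub⟩
  obtain ⟨C, hCc, hCn⟩ := exists_compact_mem_nhds (1 : G)
  have hop0 : IsOpen (interior C ∩ O 0) := isOpen_interior.inter (hOopen 0)
  have h10 : (1 : G) ∈ interior C ∩ O 0 := ⟨mem_interior_iff_mem_nhds.mpr hCn, h1O 0⟩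
  obtain ⟨K₀, hK₀c, hK₀1, hK₀sub⟩ := exists_compact_subset hop0 h10
  have hclK₀ : closure (interior K₀) ⊆ K₀ := closure_minimal interior_subset hK₀c.isClosed
  set x₀ : {V : Set G // IsOpen V ∧ (1 : G) ∈ V ∧ IsCompact (closure V)} :=
    ⟨interior K₀, isOpen_interior, hK₀1,
      IsCompact.of_isClosed_subset hK₀c isClosed_closure hclK₀⟩ with hx₀
  have hx₀O : closure x₀.1 ⊆ O 0 := hclK₀.trans (hK₀sub.trans inter_subset_right)
  choose stepX hstep using key
  set F : ℕ → {V : Set G // IsOpen V ∧ (1 : G) ∈ V ∧ IsCompact (closure V)} :=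
    fun n => Nat.rec x₀ (fun k ih => stepX k ih) n with hF
  have hFs : ∀ k, closure (F (k + 1)).1 ⊆ (F k).1 ∩ O (k + 1) := fun k => hstep k (F k)
  have hdec : ∀ k, closure (F (k + 1)).1 ⊆ closure (F k).1 :=
    fun k => ((hFs k).trans inter_subset_left).trans subset_closure
  have hmono : ∀ m n, m ≤ n → closure (F n).1 ⊆ closure (F m).1 := by
    intro m n h
    induction h with
    | refl => exact subset_rfl
    | step _ ih => exact (hdec _).trans ih
  have hiInt : (⋂ k, closure (F k).1) ⊆ {(1 : G)} := by
    rw [← hOint]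
    intro x hx
    rw [mem_iInter] at hx ⊢
    intro n
    cases n with
    | zero => exact hx₀O (hx 0)
    | succ m => exact ((hFs m) (hx (m + 1))).2
  have hbasis : (𝓝 (1 : G)).HasBasis (fun _ : ℕ => True) fun k => (F k).1 := by
    constructor
    intro U
    constructor
    · intro hU
      obtain ⟨V, hVU, hVo, hV1⟩ := mem_nhds_iff.mp hU
      have hdir : Directed (· ⊇ ·) fun k => closure (F k).1 := by
        intro i j
        exact ⟨max i j, hmono _ _ (le_max_left i j), hmono _ _ (le_max_right i j)⟩
      obtain ⟨k, hk⟩ := escape hdir (fun k => (F k).2.2.2) (fun k => isClosed_closure) hVo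
        (hiInt.trans (singleton_subset_iff.mpr hV1))
      exact ⟨k, trivial, (subset_closure.trans hk).trans hVU⟩
    · rintro ⟨k, -, hk⟩
      exact mem_nhds_iff.mpr ⟨(F k).1, hk, (F k).2.1, (F k).2.2.1⟩
  exact hbasis.isCountablyGenerated


theorem countable_Iio_of_lt_omega1 {o : Ordinal.{u}} (h : o < (Cardinal.aleph 1).ord) :
    Countable (Set.Iio o) := by
  rw [← Cardinal.mk_le_aleph0_iff, Ordinal.mk_Iio_ordinal, Cardinal.lift_le_aleph0]
  have h2 := Cardinal.lt_ord.mp h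
  rwa [← Cardinal.succ_aleph0, Order.lt_succ_iff] at h2

/-- The key combinatorial lemma: an `ω₁`-tower of compact subgroups, strictly decreasing at
successors, contradicts countable tightness. -/
theorem no_tower (htight : CountableTightness G) (N : Ordinal.{u} → Set G)
    (hcsg : ∀ o, IsCSG (N o))
    (hanti : ∀ ⦃o' o : Ordinal.{u}⦄, o' ≤ o → N o ⊆ N o')
    (hstrict : ∀ γ, γ < (Cardinal.aleph 1).ord → ∃ t, t ∈ N γ ∧ t ∉ N (γ + 1)) : False := by
  classical
  have hlim : Order.IsSuccLimit (Cardinal.aleph 1).ord :=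
    Cardinal.isSuccLimit_ord Cardinal.aleph0_lt_aleph_one.le
  have hsucc : ∀ {γ : Ordinal.{u}}, γ < (Cardinal.aleph 1).ord →
      γ + 1 < (Cardinal.aleph 1).ord := by
    intro γ h
    rw [Ordinal.add_one_eq_succ]
    exact hlim.succ_lt h
  set Z : Set G := ⋂ o : (Set.Iio ((Cardinal.aleph 1).ord : Ordinal.{u})), N o.1 with hZ
  have hZsub : ∀ {o : Ordinal.{u}}, o < (Cardinal.aleph 1).ord → Z ⊆ N o :=
    fun {o} ho => iInter_subset _ (⟨o, ho⟩ : Set.Iio _)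
  have hZinv : ∀ z ∈ Z, z⁻¹ ∈ Z := by
    intro z hz
    rw [hZ, mem_iInter] at hz ⊢
    exact fun o => (hcsg o.1).inv_mem z (hz o)
  choose t htm htn using hstrict
  have hsep : ∀ γ (h : γ < (Cardinal.aleph 1).ord), ∃ W : Set G, IsOpen W ∧ (1:G) ∈ W ∧
      ∀ a ∈ N (γ+1), ∀ w₁ ∈ W, ∀ w₂ ∈ W, ∀ b ∈ N (γ+1), a * w₁⁻¹ * w₂ * b ≠ t γ h :=
    fun γ h => sep_subgroup (hcsg (γ+1)) (htn γ h)
  choose W hWo hW1 hWsep using hsep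
  set S : ∀ γ : Ordinal.{u}, γ < (Cardinal.aleph 1).ord → Set G :=
    fun γ h => W γ h * N (γ + 1) with hS
  have hSo : ∀ γ h, IsOpen (S γ h) := fun γ h => (hWo γ h).mul_right
  have hS1 : ∀ γ h, (1:G) ∈ S γ h := by
    intro γ h
    simpa using Set.mul_mem_mul (hW1 γ h) ((hcsg (γ+1)).one_mem)
  have hSsat : ∀ γ h y, y ∈ S γ h → ∀ m ∈ N (γ + 1), y * m ∈ S γ h := by
    intro γ h y hy m hm
    rw [hS] at hy ⊢
    rw [Set.mem_mul] at hy
    obtain ⟨w, hw, m', hm', rfl⟩ := hy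
    rw [Set.mem_mul]
    exact ⟨w, hw, m' * m, (hcsg _).mul_mem m' hm' m hm, (mul_assoc w m' m).symm⟩
  have hSK1 : ∀ γ h y, y ∈ S γ h → y * t γ h ∉ S γ h := by
    intro γ h y hy hyt
    rw [hS, Set.mem_mul] at hy hyt
    obtain ⟨w₁, hw₁, m₁, hm₁, rfl⟩ := hy
    obtain ⟨w₂, hw₂, m₂, hm₂, heq⟩ := hyt
    refine hWsep γ h m₁⁻¹ ((hcsg _).inv_mem _ hm₁) w₁ hw₁ w₂ hw₂ m₂ hm₂ ?_
    have h2 : m₁⁻¹ * w₁⁻¹ * (w₂ * m₂) = t γ h := by rw [heq]; group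
    rw [← h2]; group
  have hn : ∀ β (hβ : β < (Cardinal.aleph 1).ord),
      ∃ x, x ∈ N β ∧ ∀ γ (hγ : γ < (Cardinal.aleph 1).ord), β < γ → x ∉ S γ hγ := by
    intro β hβ
    have FIP : ∀ u : Finset {γ : Ordinal.{u} // γ < (Cardinal.aleph 1).ord ∧ β < γ},
        (N β ∩ ⋂ i ∈ u, (S i.1 i.2.1)ᶜ).Nonempty := by
      intro u
      suffices h : ∃ x, x ∈ N β ∧ ∀ i ∈ u, x ∉ S i.1 i.2.1 by
        obtain ⟨x, h1, h2⟩ := h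
        exact ⟨x, h1, mem_iInter₂.mpr h2⟩
      induction u using Finset.induction_on_max with
      | empty => exact ⟨1, (hcsg β).one_mem, by simp⟩
      | insert a s ha ih =>
        obtain ⟨x, hx1, hx2⟩ := ih
        have htaN : t a.1 a.2.1 ∈ N β := hanti a.2.2.le (htm a.1 a.2.1)
        have hold : ∀ x' : G, x' ∉ S a.1 a.2.1 → (x' = x ∨ x' = x * t a.1 a.2.1) →
            ∀ i ∈ insert a s, x' ∉ S i.1 i.2.1 := by
          intro x' hx'a hx'eq i hi
          rcases Finset.mem_insert.mp hi with rfl | his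
          · exact hx'a
          · rcases hx'eq with rfl | rfl
            · exact hx2 i his
            · intro hmem
              apply hx2 i his
              have hlt : i.1 < a.1 := Subtype.coe_lt_coe.mpr (ha i his)
              have hle : i.1 + 1 ≤ a.1 := by
                rw [Ordinal.add_one_eq_succ]; exact Order.succ_le_of_lt hlt
              have htmem : (t a.1 a.2.1)⁻¹ ∈ N (i.1 + 1) :=
                (hcsg _).inv_mem _ (hanti hle (htm a.1 a.2.1))
              have h2 := hSsat i.1 i.2.1 _ hmem _ htmem
              have h3 : x = x * t a.1 a.2.1 * (t a.1 a.2.1)⁻¹ := by group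
              rw [h3]; exact h2
        by_cases hxa : x ∈ S a.1 a.2.1
        · exact ⟨x * t a.1 a.2.1, (hcsg β).mul_mem x hx1 _ htaN,
            hold _ (hSK1 a.1 a.2.1 x hxa) (Or.inr rfl)⟩
        · exact ⟨x, hx1, hold x hxa (Or.inl rfl)⟩
    obtain ⟨x, hx1, hx2⟩ := (hcsg β).cpt.inter_iInter_nonempty
      (fun i : {γ : Ordinal.{u} // γ < (Cardinal.aleph 1).ord ∧ β < γ} => (S i.1 i.2.1)ᶜ)
      (fun i => (hSo i.1 i.2.1).isClosed_compl) FIP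
    exact ⟨x, hx1, fun γ hγ hβγ => mem_iInter.mp hx2 ⟨γ, hγ, hβγ⟩⟩
  choose n hn1 hn2 using hn
  set A : Set G := ⋃ i : (Set.Iio ((Cardinal.aleph 1).ord : Ordinal.{u})), (n i.1 i.2) • Z
    with hA
  have hclosA : (1:G) ∈ closure A := by
    rw [mem_closure_iff]
    intro O hOo hO1
    have hOZ : IsOpen (O * Z) := hOo.mul_right
    have hZOZ : Z ⊆ O * Z := by
      intro z hz
      rw [Set.mem_mul]
      exact ⟨1, hO1, z, hz, one_mul z⟩
    haveI : Nonempty (Set.Iio ((Cardinal.aleph 1).ord : Ordinal.{u})) := ⟨⟨0, hlim.pos⟩⟩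
    have hdir : Directed (· ⊇ ·)
        fun i : (Set.Iio ((Cardinal.aleph 1).ord : Ordinal.{u})) => N i.1 := by
      intro i j
      rcases le_total i.1 j.1 with h | h
      · exact ⟨j, hanti h, subset_rfl⟩
      · exact ⟨i, subset_rfl, hanti h⟩
    obtain ⟨i, hi⟩ := escape hdir (fun i => (hcsg i.1).cpt) (fun i => (hcsg i.1).closed) hOZ
      (by rw [← hZ]; exact hZOZ)
    have hmem := hi (hn1 i.1 i.2)
    rw [Set.mem_mul] at hmem
    obtain ⟨o, ho, z, hz, hoz⟩ := hmem
    refine ⟨o, ho, mem_iUnion.mpr ⟨i, ?_⟩⟩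
    refine Set.mem_smul_set.mpr ⟨z⁻¹, hZinv z hz, ?_⟩
    rw [smul_eq_mul, ← hoz]
    group
  obtain ⟨B, hBA, hBc, hB1⟩ := htight A 1 hclosA
  have hBidx : ∀ b : B, ∃ i : (Set.Iio ((Cardinal.aleph 1).ord : Ordinal.{u})),
      (b : G) ∈ (n i.1 i.2) • Z := fun b => mem_iUnion.mp (hBA b.2)
  choose I hI using hBidx
  haveI : Countable B := hBc.to_subtype
  have hbound : iSup (fun b : B => (I b).1 + 1) < (Cardinal.aleph 1).ord :=
    lt_of_lt_of_eq (Ordinal.iSup_lt_omega_one (fun b => lt_of_lt_of_eq (hsucc (I b).2) (Cardinal.ord_aleph 1))) (Cardinal.ord_aleph 1).symm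
  set γs : Ordinal.{u} := iSup (fun b : B => (I b).1 + 1) with hγs
  have hγslt : γs < (Cardinal.aleph 1).ord := hbound
  have hblt : ∀ b : B, (I b).1 < γs := by
    intro b
    have h1 : (I b).1 + 1 ≤ γs := le_ciSup (Ordinal.bddAbove_range _) b
    have h2 : (I b).1 < (I b).1 + 1 := by
      rw [Ordinal.add_one_eq_succ]; exact Order.lt_succ _
    exact h2.trans_le h1
  have hdisj : ∀ b : B, (b : G) ∉ S γs hγslt := by
    intro b hbS
    obtain ⟨z, hz, hbz⟩ := Set.mem_smul_set.mp (hI b)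
    have hzinv : z⁻¹ ∈ N (γs + 1) := hZsub (hsucc hγslt) (hZinv z hz)
    have hmem : (b : G) * z⁻¹ ∈ S γs hγslt := hSsat _ _ _ hbS _ hzinv
    have heq : (b : G) * z⁻¹ = n (I b).1 (I b).2 := by
      rw [← hbz, smul_eq_mul]; group
    rw [heq] at hmem
    exact hn2 (I b).1 (I b).2 γs hγslt (hblt b) hmem
  obtain ⟨y, hyS, hyB⟩ := mem_closure_iff.mp hB1 _ (hSo γs hγslt) (hS1 γs hγslt)
  exact hdisj ⟨y, hyB⟩ hyS


open Classical in
noncomputable def towerStep (C₀ : Set G) (avoidS : G → Set G) (P : Set G) : Set G :=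
  if h : ∃ z, z ∈ P ∩ C₀ ∧ z ≠ 1 then (P ∩ C₀) ∩ avoidS h.choose else P ∩ C₀

noncomputable def tower (C₀ : Set G) (avoidS : G → Set G) : Ordinal.{u} → Set G :=
  Ordinal.lt_wf.fix fun o rec => towerStep C₀ avoidS (⋂ o' : (Set.Iio o), rec o'.1 o'.2)

theorem tower_eq (C₀ : Set G) (avoidS : G → Set G) (o : Ordinal.{u}) :
    tower C₀ avoidS o
      = towerStep C₀ avoidS (⋂ o' : (Set.Iio o), tower C₀ avoidS o'.1) :=
  WellFounded.fix_eq _ _ o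

theorem towerStep_subset (C₀ : Set G) (avoidS : G → Set G) (P : Set G) :
    towerStep C₀ avoidS P ⊆ P ∩ C₀ := by
  unfold towerStep
  split
  · exact inter_subset_left
  · exact subset_rfl

attribute [irreducible] tower

theorem nhds_one_cg [LocallyCompactSpace G] (htight : CountableTightness G) :
    (𝓝 (1:G)).IsCountablyGenerated := by
  classical
  obtain ⟨C, hCc, hCn⟩ := exists_compact_mem_nhds (1 : G)
  obtain ⟨C₀, hC₀, hC₀gd, hC₀U⟩ := exists_csg_subset hCc isOpen_interior
    (mem_interior_iff_mem_nhds.mpr hCn) interior_subset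
  have avoid : ∀ z : G, ∃ Nz : Set G, IsCSG Nz ∧ CoGd Nz ∧ (z ≠ 1 → z ∉ Nz) := by
    intro z
    by_cases hz : z ≠ 1
    · have hop : IsOpen (interior C ∩ {z}ᶜ) := isOpen_interior.inter isOpen_compl_singleton
      have h1 : (1 : G) ∈ interior C ∩ {z}ᶜ := by
        refine ⟨mem_interior_iff_mem_nhds.mpr hCn, ?_⟩
        intro h
        rw [mem_singleton_iff] at h
        exact hz h.symm
      obtain ⟨Nz, h1', h2, h3⟩ := exists_csg_subset hCc hop h1
        (inter_subset_left.trans interior_subset)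
      exact ⟨Nz, h1', h2, fun _ hmem => (h3 hmem).2 rfl⟩
    · push_neg at hz
      exact ⟨C₀, hC₀, hC₀gd, fun hne => absurd hz hne⟩
  choose avoidS havoidCSG havoidGd havoidNot using avoid
  have hNsub : ∀ o : Ordinal.{u}, tower C₀ avoidS o
      ⊆ (⋂ o' : (Set.Iio o), tower C₀ avoidS o'.1) ∩ C₀ := by
    intro o
    rw [tower_eq]
    exact towerStep_subset _ _ _
  have hNanti : ∀ ⦃o' o : Ordinal.{u}⦄, o' ≤ o → tower C₀ avoidS o ⊆ tower C₀ avoidS o' := by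
    intro o' o h
    rcases eq_or_lt_of_le h with rfl | hlt
    · exact subset_rfl
    · exact ((hNsub o).trans inter_subset_left).trans (iInter_subset _ (⟨o', hlt⟩ : Set.Iio _))
  have hNC₀ : ∀ o : Ordinal.{u}, tower C₀ avoidS o ⊆ C₀ :=
    fun o => (hNsub o).trans inter_subset_right
  have hcsg : ∀ o : Ordinal.{u}, IsCSG (tower C₀ avoidS o) := by
    intro o
    refine Ordinal.lt_wf.induction (C := fun o => IsCSG (tower C₀ avoidS o)) o ?_
    intro o IH
    rw [tower_eq]
    have hcl : IsClosed ((⋂ o' : (Set.Iio o), tower C₀ avoidS o'.1) ∩ C₀) :=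
      (isClosed_iInter fun (o' : Set.Iio o) => (IH o'.1 o'.2).closed).inter hC₀.closed
    have hPre : IsCSG ((⋂ o' : (Set.Iio o), tower C₀ avoidS o'.1) ∩ C₀) := by
      constructor
      · exact ⟨mem_iInter.mpr fun (o' : Set.Iio o) => (IH o'.1 o'.2).one_mem, hC₀.one_mem⟩
      · intro a ha b hb
        exact ⟨mem_iInter.mpr fun (o' : Set.Iio o) =>
          (IH o'.1 o'.2).mul_mem a (mem_iInter.mp ha.1 o') b (mem_iInter.mp hb.1 o'),
          hC₀.mul_mem a ha.2 b hb.2⟩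
      · intro a ha
        exact ⟨mem_iInter.mpr fun (o' : Set.Iio o) => (IH o'.1 o'.2).inv_mem a (mem_iInter.mp ha.1 o'),
          hC₀.inv_mem a ha.2⟩
      · exact IsCompact.of_isClosed_subset hC₀.cpt hcl inter_subset_right
      · exact hcl
    unfold towerStep
    split
    · exact hPre.inter (havoidCSG _)
    · exact hPre
  have hgd : ∀ o : Ordinal.{u}, o < (Cardinal.aleph 1).ord → CoGd (tower C₀ avoidS o) := by
    intro o
    refine Ordinal.lt_wf.induction
      (C := fun o => o < (Cardinal.aleph 1).ord → CoGd (tower C₀ avoidS o)) o ?_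
    intro o IH ho
    rw [tower_eq]
    have hPre : CoGd ((⋂ o' : (Set.Iio o), tower C₀ avoidS o'.1) ∩ C₀) := by
      haveI : Countable (Set.Iio o) := countable_Iio_of_lt_omega1 ho
      exact (CoGd.iInter fun (o' : Set.Iio o) =>
        IH o'.1 o'.2 (lt_trans o'.2 ho)).inter hC₀gd
    unfold towerStep
    split
    · exact hPre.inter (havoidGd _)
    · exact hPre
  have hPre_succ : ∀ γ : Ordinal.{u},
      (⋂ o' : (Set.Iio (γ+1)), tower C₀ avoidS o'.1) = tower C₀ avoidS γ := by
    intro γ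
    apply Subset.antisymm
    · exact iInter_subset (fun o'' : (Set.Iio (γ+1)) => tower C₀ avoidS o''.1)
        ⟨γ, Set.mem_Iio.mpr (by rw [Ordinal.add_one_eq_succ]; exact Order.lt_succ γ)⟩
    · refine subset_iInter fun (o' : Set.Iio (γ+1)) => hNanti ?_
      have h2 : o'.1 < γ + 1 := o'.2
      have h3 : o'.1 < Order.succ γ := by rw [← Ordinal.add_one_eq_succ]; exact h2
      exact Order.lt_succ_iff.mp h3
  have hstrict : ∀ γ : Ordinal.{u}, γ < (Cardinal.aleph 1).ord →
      tower C₀ avoidS γ ≠ {1} →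
      ∃ t, t ∈ tower C₀ avoidS γ ∧ t ∉ tower C₀ avoidS (γ + 1) := by
    intro γ hγ hne
    have hPs : (⋂ o' : (Set.Iio (γ+1)), tower C₀ avoidS o'.1) ∩ C₀ = tower C₀ avoidS γ := by
      rw [hPre_succ γ]
      exact inter_eq_left.mpr (hNC₀ γ)
    have hz : ∃ z, z ∈ (⋂ o' : (Set.Iio (γ+1)), tower C₀ avoidS o'.1) ∩ C₀ ∧ z ≠ 1 := by
      rw [hPs]
      by_contra hcon
      push_neg at hcon
      apply hne
      apply Subset.antisymm
      · intro z hzz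
        rw [mem_singleton_iff]
        exact hcon z hzz
      · intro z hzz
        rw [mem_singleton_iff] at hzz
        rw [hzz]
        exact (hcsg γ).one_mem
    refine ⟨hz.choose, ?_, ?_⟩
    · exact hPs.subset hz.choose_spec.1
    · rw [tower_eq C₀ avoidS (γ+1)]
      unfold towerStep
      rw [dif_pos hz]
      intro hmem
      exact havoidNot _ hz.choose_spec.2 hmem.2
  by_cases hterm : ∃ o : Ordinal.{u}, o < (Cardinal.aleph 1).ord ∧ tower C₀ avoidS o = {1}
  · obtain ⟨o, ho, hNo⟩ := hterm
    have hg := hgd o ho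
    rw [hNo] at hg
    obtain ⟨T, hTc, hTo, hT⟩ := hg
    exact cg_of_gdelta hTc hTo hT.symm
  · push_neg at hterm
    exact absurd (no_tower htight (tower C₀ avoidS) hcsg hNanti
      (fun γ hγ => hstrict γ hγ (hterm γ hγ))) not_false


theorem metrizable_of_tight [LocallyCompactSpace G] (htight : CountableTightness G) :
    TopologicalSpace.MetrizableSpace G := by
  haveI hcg : (𝓝 (1:G)).IsCountablyGenerated := nhds_one_cg htight
  letI : UniformSpace G := IsTopologicalGroup.rightUniformSpace G
  haveI : (𝓤 G).IsCountablyGenerated := by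
    have he : (𝓤 G) = comap (fun p : G × G => p.2 * p.1⁻¹) (𝓝 (1:G)) := rfl
    rw [he]
    exact Filter.comap.isCountablyGenerated _ _
  exact UniformSpace.metrizableSpace

end TanakaAux

end Auxiliary

theorem stmt2 [Group G] [TopologicalSpace G] [IsTopologicalGroup G] [T2Space G]
    (hhemi : Hemicompact G) (htight : CountableTightness G) (htanaka : TanakaSpace G) :
    LocallyCompactSpace G ∧ TopologicalSpace.MetrizableSpace G := by
  -- Part 1: local compactness, via hemicompactness and the Tanaka property.
  have key : ∃ K : Set G, IsCompact K ∧ K ∈ 𝓝 (1 : G) := by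
    obtain ⟨K, hKc, hKabs⟩ := hhemi
    set K' : ℕ → Set G := fun n => ⋃ i ∈ Set.Iic n, K i with hK'def
    have hK'c : ∀ n, IsCompact (K' n) := fun n =>
      (Set.finite_Iic n).isCompact_biUnion (fun i _ => hKc i)
    have hK'mono : Monotone K' := fun m n hmn =>
      Set.biUnion_subset_biUnion_left (Set.Iic_subset_Iic.mpr hmn)
    have hK'abs : ∀ C : Set G, IsCompact C → ∃ n, C ⊆ K' n := by
      intro C hC
      obtain ⟨n, hn⟩ := hKabs C hC
      exact ⟨n, hn.trans (Set.subset_biUnion_of_mem (Set.mem_Iic.mpr le_rfl))⟩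
    by_contra h
    push_neg at h
    have hnn : ∀ n, K' n ∉ 𝓝 (1 : G) := fun n hmem => h (K' n) (hK'c n) hmem
    have h1 : ∀ n, (1 : G) ∈ closure (K' n)ᶜ := by
      intro n
      rw [closure_compl]
      intro hx
      exact hnn n (mem_interior_iff_mem_nhds.mp hx)
    set s : ℕ → Set G := fun n => (K' n)ᶜ with hsdef
    have hdir : Directed (· ≥ ·) s := by
      intro m n
      exact ⟨max m n, Set.compl_subset_compl.mpr (hK'mono (le_max_left m n)),
        Set.compl_subset_compl.mpr (hK'mono (le_max_right m n))⟩
    set H : Filter G := ⨅ n, 𝓟 (s n) with hHdef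
    have hbasis : H.HasBasis (fun _ : ℕ => True) s := hasBasis_iInf_principal hdir
    have hcg : H.IsCountablyGenerated := hbasis.isCountablyGenerated
    have hadh : (adh H).Nonempty := by
      refine ⟨1, ?_⟩
      simp only [adh, Set.mem_iInter]
      intro A hA
      obtain ⟨n, -, hn⟩ := hbasis.mem_iff.mp hA
      exact closure_mono hn (h1 n)
    obtain ⟨x, l, hconv, hmesh⟩ := htanaka H hcg hadh
    have hC : IsCompact (insert l (Set.range x)) := hconv.isCompact_insert_range
    obtain ⟨n, hn⟩ := hK'abs _ hC
    have hsn : s n ∈ H := hbasis.mem_of_mem trivial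
    obtain ⟨m, -, hm⟩ := hmesh _ hsn 0
    exact hm (hn (Set.mem_insert_iff.mpr (Or.inr ⟨m, rfl⟩)))
  obtain ⟨K, hKc, hKn⟩ := key
  have lc : LocallyCompactSpace G := hKc.locallyCompactSpace_of_mem_nhds_of_group hKn
  haveI := lc
  exact ⟨lc, TanakaAux.metrizable_of_tight htight⟩
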